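/- Let G be a finite set and let I : ℝ^G → ℝ^G be a Lipschitz map (with respect to the sup norm on ℝ^G). Then for every u ∈ ℝ^G and every x ∈ G, I(u)(x) = min over v ∈ ℝ^G of the max over L ∈ 𝒟I of ( I(v)(x) + L(u − v)(x) ), where 𝒟I is the full Clarke differential of I; the inner maximum is attained for each v (𝒟I being compact and convex, all its elements having operator norm at most the Lipschitz constant of I), and the outer minimum is attained at v = u. -/

import Mathlib

open Filter

noncomputable section

variable {G : Type*} [Fintype G]

/-- the set of limits of Fréchet derivatives of `I` along sequences converging to `u` -/
def clarkeLimits (I : (G → ℝ) → (G → ℝ)) (u : G → ℝ) :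
    Set ((G → ℝ) →L[ℝ] (G → ℝ)) :=
  {L | ∃ f : ℕ → G → ℝ, (∀ n, DifferentiableAt ℝ I (f n)) ∧
        Tendsto f atTop (nhds u) ∧
        Tendsto (fun n => fderiv ℝ I (f n)) atTop (nhds L)}

/-- the Clarke differential of `I` at `u` -/
def clarkeDiffAt (I : (G → ℝ) → (G → ℝ)) (u : G → ℝ) :
    Set ((G → ℝ) →L[ℝ] (G → ℝ)) :=
  closure (convexHull ℝ (clarkeLimits I u))

/-- the full Clarke differential of `I` -/
def clarkeDiff (I : (G → ℝ) → (G → ℝ)) : Set ((G → ℝ) →L[ℝ] (G → ℝ)) :=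
  closure (convexHull ℝ (⋃ u : G → ℝ, clarkeDiffAt I u))

namespace ClarkeAux

open MeasureTheory Set ENNReal

/-- 1-D mean value inequality for Lipschitz functions with a.e. derivative bound. -/
lemma key1d {g : ℝ → ℝ} {M : NNReal} (hg : LipschitzWith M g) {c : ℝ}
    (hc : ∀ᵐ t : ℝ, t ∈ Set.Ioc (0:ℝ) 1 → DifferentiableAt ℝ g t ∧ deriv g t ≤ c) :
    g 1 - g 0 ≤ c := by
  by_cases hMc : (M : ℝ) ≤ c
  · have := hg.dist_le_mul 1 0
    have h1 : dist (g 1) (g 0) ≤ M := by simpa using this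
    calc g 1 - g 0 ≤ |g 1 - g 0| := le_abs_self _
      _ = dist (g 1) (g 0) := (Real.dist_eq _ _).symm
      _ ≤ M := h1
      _ ≤ c := hMc
  push_neg at hMc
  set φ : ℝ → ℝ := fun t => M * t - g t with hφ
  have hmono : Monotone φ := by
    intro s t hst
    have : g t - g s ≤ M * (t - s) := by
      calc g t - g s ≤ |g t - g s| := le_abs_self _
        _ = dist (g t) (g s) := (Real.dist_eq _ _).symm
        _ ≤ M * dist t s := hg.dist_le_mul t s
        _ = M * (t - s) := by rw [Real.dist_eq, abs_of_nonneg (by linarith)]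
    simp only [hφ]; nlinarith
  have hder := hmono.ae_hasDerivAt
  set μ := hmono.stieltjesFunction.measure with hμ
  have hfin : ∀ᵐ t : ℝ, μ.rnDeriv volume t < ⊤ := Measure.rnDeriv_lt_top μ volume
  have key : ∀ᵐ t : ℝ, t ∈ Set.Ioc (0:ℝ) 1 →
      ENNReal.ofReal (M - c) ≤ μ.rnDeriv volume t := by
    filter_upwards [hder, hc, hfin] with t ht hct hft htIoc
    obtain ⟨hdiff, hdc⟩ := hct htIoc
    have h2 : HasDerivAt φ ((M : ℝ) - deriv g t) t := by
      have := ((hasDerivAt_id t).const_mul (M:ℝ)).sub hdiff.hasDerivAt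
      simp only [mul_one] at this; exact this
    have heq : (μ.rnDeriv volume t).toReal = (M : ℝ) - deriv g t := ht.unique h2
    have h3 : (M : ℝ) - c ≤ (μ.rnDeriv volume t).toReal := by linarith
    calc ENNReal.ofReal ((M:ℝ) - c) ≤ ENNReal.ofReal ((μ.rnDeriv volume t).toReal) :=
          ENNReal.ofReal_le_ofReal h3
      _ = μ.rnDeriv volume t := ENNReal.ofReal_toReal hft.ne
  have h4 : ENNReal.ofReal ((M:ℝ) - c) ≤ μ (Set.Ioc 0 1) := by
    calc ENNReal.ofReal ((M:ℝ) - c)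
        = ENNReal.ofReal ((M:ℝ) - c) * volume (Set.Ioc (0:ℝ) 1) := by
          simp [Real.volume_Ioc]
      _ = ∫⁻ _t in Set.Ioc (0:ℝ) 1, ENNReal.ofReal ((M:ℝ) - c) ∂volume := by
          rw [MeasureTheory.setLIntegral_const]
      _ ≤ ∫⁻ t in Set.Ioc (0:ℝ) 1, μ.rnDeriv volume t ∂volume := by
          refine MeasureTheory.setLIntegral_mono_ae
            (μ.measurable_rnDeriv volume).aemeasurable ?_
          filter_upwards [key] with t ht h using ht h
      _ = (volume.withDensity (μ.rnDeriv volume)) (Set.Ioc 0 1) := by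
          rw [MeasureTheory.withDensity_apply _ measurableSet_Ioc]
      _ ≤ μ (Set.Ioc 0 1) := Measure.withDensity_rnDeriv_le μ volume _
  have hcont : Continuous φ := by
    have : Continuous g := hg.continuous
    fun_prop
  have hsf : ∀ a : ℝ, hmono.stieltjesFunction a = φ a := by
    intro a
    rw [hmono.stieltjesFunction_eq]
    exact rightLim_eq_of_tendsto
      (hcont.continuousAt.continuousWithinAt)
  have h5 : μ (Set.Ioc 0 1) = ENNReal.ofReal (φ 1 - φ 0) := by
    rw [hμ, StieltjesFunction.measure_Ioc, hsf, hsf]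
  rw [h5] at h4
  have h6 : (M : ℝ) - c ≤ φ 1 - φ 0 := by
    have h0 : (0:ℝ) ≤ φ 1 - φ 0 := by
      have := hmono (by norm_num : (0:ℝ) ≤ 1); linarith
    exact (ENNReal.ofReal_le_ofReal_iff h0).1 h4
  simp only [hφ] at h6
  linarith

/-- near any point there is a starting point from which the segment in direction `d`
meets the non-differentiability set of `I` in a null set. -/
lemma exists_good_start [Nonempty G] {I : (G → ℝ) → (G → ℝ)} {K₀ : NNReal}
    (hLip : LipschitzWith K₀ I) (v d : G → ℝ) {ε : ℝ} (hε : 0 < ε) :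
    ∃ w : G → ℝ, dist w v < ε ∧
      ∀ᵐ t : ℝ, t ∈ Set.Ioc (0:ℝ) 1 → DifferentiableAt ℝ I (w + t • d) := by
  set N : Set (G → ℝ) := {p | ¬ DifferentiableAt ℝ I p} with hN
  have hNmeas : MeasurableSet N := (measurableSet_of_differentiableAt ℝ I).compl
  have hN0 : volume N = 0 := ae_iff.1 (hLip.ae_differentiableAt (μ := volume))
  set s : Set (ℝ × (G → ℝ)) := {q | q.1 ∈ Set.Ioc (0:ℝ) 1 ∧ q.2 + q.1 • d ∈ N} with hs
  have hmap : Measurable fun q : ℝ × (G → ℝ) => q.2 + q.1 • d := by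
    have : Continuous fun q : ℝ × (G → ℝ) => q.2 + q.1 • d := by fun_prop
    exact this.measurable
  have hsmeas : MeasurableSet s := by
    have h : s = (Set.Ioc (0:ℝ) 1 ×ˢ Set.univ) ∩
        ((fun q : ℝ × (G → ℝ) => q.2 + q.1 • d) ⁻¹' N) := by
      ext q; simp only [hs, Set.mem_setOf_eq, Set.mem_inter_iff, Set.mem_prod, Set.mem_univ,
        and_true, Set.mem_preimage]
    rw [h]
    exact (measurableSet_Ioc.prod MeasurableSet.univ).inter (hmap hNmeas)
  have hsect : ∀ t : ℝ, (volume : Measure (G → ℝ)) (Prod.mk t ⁻¹' s) = 0 := by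
    intro t
    by_cases ht : t ∈ Set.Ioc (0:ℝ) 1
    · have h : Prod.mk t ⁻¹' s = (fun w : G → ℝ => w + t • d) ⁻¹' N := by
        ext w
        simp only [hs, Set.mem_preimage, Set.mem_setOf_eq]
        exact and_iff_right ht
      rw [h, measure_preimage_add_right]
      exact hN0
    · have h : Prod.mk t ⁻¹' s = ∅ := by
        ext w
        simp only [hs, Set.mem_preimage, Set.mem_setOf_eq, Set.mem_empty_iff_false, iff_false,
          not_and]
        exact fun h' => absurd h' ht
      simp [h]
  have hprod : (volume : Measure ℝ).prod (volume : Measure (G → ℝ)) s = 0 := by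
    rw [Measure.measure_prod_null hsmeas]
    exact Filter.Eventually.of_forall fun t => by simp [hsect t]
  set s' : Set ((G → ℝ) × ℝ) := Prod.swap ⁻¹' s with hs'
  have hprod' : (volume : Measure (G → ℝ)).prod (volume : Measure ℝ) s' = 0 := by
    have h : (volume : Measure (G → ℝ)).prod volume s'
        = Measure.map Prod.swap ((volume : Measure (G → ℝ)).prod volume) s := by
      rw [Measure.map_apply measurable_swap hsmeas]
    rw [h, Measure.prod_swap]
    exact hprod
  have hae : ∀ᵐ w : G → ℝ, (volume : Measure ℝ) (Prod.mk w ⁻¹' s') = 0 := by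
    have := (Measure.measure_prod_null (measurable_swap hsmeas)).1 hprod'
    filter_upwards [this] with w hw using hw
  have hball : (0 : ℝ≥0∞) < volume (Metric.ball v ε) := Metric.measure_ball_pos _ _ hε
  have hex : ∃ w ∈ Metric.ball v ε, (volume : Measure ℝ) (Prod.mk w ⁻¹' s') = 0 := by
    by_contra hcon
    push_neg at hcon
    have hsub : Metric.ball v ε ⊆ {w : G → ℝ | ¬ (volume : Measure ℝ) (Prod.mk w ⁻¹' s') = 0} :=
      fun w hw => hcon w hw
    exact absurd (measure_mono_null hsub (ae_iff.1 hae)) hball.ne'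
  obtain ⟨w, hw, hw0⟩ := hex
  refine ⟨w, Metric.mem_ball.1 hw, ?_⟩
  rw [ae_iff]
  have h : {t : ℝ | ¬(t ∈ Set.Ioc (0:ℝ) 1 → DifferentiableAt ℝ I (w + t • d))}
      = Prod.mk w ⁻¹' s' := by
    ext t
    simp only [hs', hs, hN, Set.mem_preimage, Prod.swap_prod_mk, Set.mem_setOf_eq,
      Classical.not_imp]
  rw [h]; exact hw0

lemma fderiv_mem_clarkeDiff {I : (G → ℝ) → (G → ℝ)} {p : G → ℝ}
    (h : DifferentiableAt ℝ I p) : fderiv ℝ I p ∈ clarkeDiff I := by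
  apply subset_closure
  apply subset_convexHull
  apply Set.mem_iUnion.2 ⟨p, ?_⟩
  apply subset_closure
  apply subset_convexHull
  exact ⟨fun _ => p, fun _ => h, tendsto_const_nhds, tendsto_const_nhds⟩

lemma clarkeDiff_subset_ball {I : (G → ℝ) → (G → ℝ)} {K₀ : NNReal}
    (hLip : LipschitzWith K₀ I) :
    clarkeDiff I ⊆ Metric.closedBall (0 : (G → ℝ) →L[ℝ] (G → ℝ)) K₀ := by
  have hball : Convex ℝ (Metric.closedBall (0 : (G → ℝ) →L[ℝ] (G → ℝ)) K₀) :=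
    convex_closedBall _ _
  have hcl : IsClosed (Metric.closedBall (0 : (G → ℝ) →L[ℝ] (G → ℝ)) K₀) :=
    Metric.isClosed_closedBall
  have hlim : ∀ u : G → ℝ, clarkeLimits I u ⊆
      Metric.closedBall (0 : (G → ℝ) →L[ℝ] (G → ℝ)) K₀ := by
    rintro u L ⟨f, hf, -, hL⟩
    rw [Metric.mem_closedBall, dist_zero_right]
    have : ∀ n, ‖fderiv ℝ I (f n)‖ ≤ (K₀ : ℝ) :=
      fun n => norm_fderiv_le_of_lipschitz ℝ hLip
    exact le_of_tendsto (hL.norm) (Filter.Eventually.of_forall this)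
  have hAt : ∀ u : G → ℝ, clarkeDiffAt I u ⊆
      Metric.closedBall (0 : (G → ℝ) →L[ℝ] (G → ℝ)) K₀ := fun u =>
    closure_minimal (convexHull_min (hlim u) hball) hcl
  exact closure_minimal (convexHull_min (Set.iUnion_subset hAt) hball) hcl

/-- the key mean-value-type inequality. -/
lemma key_ineq [Nonempty G] {I : (G → ℝ) → (G → ℝ)} {K₀ : NNReal}
    (hLip : LipschitzWith K₀ I) (u v : G → ℝ) (x : G) {c : ℝ}
    (hc : ∀ p : G → ℝ, DifferentiableAt ℝ I p → (fderiv ℝ I p) (u - v) x ≤ c) :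
    I u x - I v x ≤ c := by
  set d : G → ℝ := u - v with hd
  refine le_of_forall_pos_le_add fun ε hε => ?_
  have hε' : 0 < ε / (2 * K₀ + 1) := by positivity
  obtain ⟨w, hwv, hwae⟩ := exists_good_start hLip v d hε'
  set g : ℝ → ℝ := fun t => I (w + t • d) x with hg
  have hglip : LipschitzWith (K₀ * ‖d‖₊) g := by
    intro s t
    have h1 : edist (I (w + s • d) x) (I (w + t • d) x)
        ≤ edist (I (w + s • d)) (I (w + t • d)) := edist_le_pi_edist _ _ x
    have h2 := hLip (w + s • d) (w + t • d)
    have h3 : edist (w + s • d) (w + t • d) = ‖d‖₊ * edist s t := by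
      rw [edist_add_left]
      simp [edist_nndist, nndist_eq_nnnorm, ← sub_smul, nnnorm_smul, ENNReal.coe_mul, mul_comm]
    calc edist (g s) (g t) ≤ edist (I (w + s • d)) (I (w + t • d)) := h1
      _ ≤ K₀ * edist (w + s • d) (w + t • d) := h2
      _ = (K₀ * ‖d‖₊ : NNReal) * edist s t := by rw [h3, ENNReal.coe_mul, mul_assoc]
  have hgd : ∀ᵐ t : ℝ, t ∈ Set.Ioc (0:ℝ) 1 →
      DifferentiableAt ℝ g t ∧ deriv g t ≤ c := by
    filter_upwards [hwae] with t ht htIoc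
    have hI := ht htIoc
    have hline : HasDerivAt (fun t : ℝ => w + t • d) d t := by
      simpa using ((hasDerivAt_id t).smul_const d).const_add w
    have h1 : HasDerivAt (fun t : ℝ => I (w + t • d)) ((fderiv ℝ I (w + t • d)) d) t :=
      hI.hasFDerivAt.comp_hasDerivAt t hline
    have h2 : HasDerivAt g ((fderiv ℝ I (w + t • d)) d x) t := by
      exact
        (ContinuousLinearMap.proj (R := ℝ) (φ := fun _ : G => ℝ)
          x).hasFDerivAt.comp_hasDerivAt t h1
    refine ⟨h2.differentiableAt, ?_⟩
    rw [h2.deriv]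
    exact hc _ hI
  have hkey : g 1 - g 0 ≤ c := key1d hglip hgd
  have hgen : ∀ a b : G → ℝ, I a x - I b x ≤ K₀ * dist a b := by
    intro a b
    calc I a x - I b x ≤ |I a x - I b x| := le_abs_self _
      _ = dist (I a x) (I b x) := (Real.dist_eq _ _).symm
      _ ≤ dist (I a) (I b) := dist_le_pi_dist _ _ x
      _ ≤ K₀ * dist a b := hLip.dist_le_mul a b
  have hda : dist u (w + (1:ℝ) • d) = dist v w := by
    rw [dist_eq_norm, dist_eq_norm]
    congr 1
    simp [hd]
    abel
  have hdb : dist (w + (0:ℝ) • d) v = dist w v := by simp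
  have e1 : I u x - I (w + (1:ℝ) • d) x ≤ K₀ * dist v w := by
    have := hgen u (w + (1:ℝ) • d); rwa [hda] at this
  have e2 : I (w + (0:ℝ) • d) x - I v x ≤ K₀ * dist w v := by
    have := hgen (w + (0:ℝ) • d) v; rwa [hdb] at this
  have e3 : I (w + (1:ℝ) • d) x - I (w + (0:ℝ) • d) x ≤ c := hkey
  have hdistwv : dist w v < ε / (2 * K₀ + 1) := hwv
  have hdistvw : dist v w < ε / (2 * K₀ + 1) := by rwa [dist_comm]
  have hK : (0:ℝ) ≤ K₀ := K₀.coe_nonneg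
  have h2K : (K₀ : ℝ) * (ε / (2 * K₀ + 1)) + (K₀ : ℝ) * (ε / (2 * K₀ + 1)) ≤ ε := by
    have h1 : (0:ℝ) < 2 * K₀ + 1 := by positivity
    have h2 : 2 * (K₀:ℝ) * (ε / (2 * K₀ + 1)) ≤ (2 * K₀ + 1) * (ε / (2 * K₀ + 1)) :=
      mul_le_mul_of_nonneg_right (by linarith) (by positivity)
    have h3 : (2 * (K₀:ℝ) + 1) * (ε / (2 * K₀ + 1)) = ε := by field_simp
    linarith
  have b1 : (K₀ : ℝ) * dist v w ≤ K₀ * (ε / (2 * K₀ + 1)) :=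
    mul_le_mul_of_nonneg_left hdistvw.le hK
  have b2 : (K₀ : ℝ) * dist w v ≤ K₀ * (ε / (2 * K₀ + 1)) :=
    mul_le_mul_of_nonneg_left hdistwv.le hK
  linarith

end ClarkeAux

open MeasureTheory in
/-- min-max formula for Lipschitz maps `I : ℝ^G → ℝ^G` on a finite set
`G`: `I(u)(x) = min_v max_{L ∈ 𝒟I} (I(v)(x) + L(u-v)(x))`, the full Clarke differential
`𝒟I` being compact, convex, and norm-bounded by the Lipschitz constant; the inner max is
attained for each `v` and the outer min is attained at `v = u`. -/
theorem finite_minmax (G : Type*) [Fintype G] [Nonempty G]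
    (I : (G → ℝ) → (G → ℝ)) (K₀ : NNReal) (hLip : LipschitzWith K₀ I) :
    IsCompact (clarkeDiff I) ∧ Convex ℝ (clarkeDiff I) ∧
    (∀ L ∈ clarkeDiff I, ‖L‖ ≤ (K₀ : ℝ)) ∧
    ∀ (u : G → ℝ) (x : G),
      (∀ v : G → ℝ,
        sSup {s : ℝ | ∃ L ∈ clarkeDiff I, s = I v x + L (u - v) x}
          ∈ {s : ℝ | ∃ L ∈ clarkeDiff I, s = I v x + L (u - v) x}) ∧
      I u x = sInf {r : ℝ | ∃ v : G → ℝ,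
          r = sSup {s : ℝ | ∃ L ∈ clarkeDiff I, s = I v x + L (u - v) x}} ∧
      sSup {s : ℝ | ∃ L ∈ clarkeDiff I, s = I u x + L (u - u) x} = I u x := by
  have hsub := ClarkeAux.clarkeDiff_subset_ball hLip
  have hclosed : IsClosed (clarkeDiff I) := isClosed_closure
  have hbdd : Bornology.IsBounded (clarkeDiff I) :=
    Metric.isBounded_closedBall.subset hsub
  have hcomp : IsCompact (clarkeDiff I) :=
    Metric.isCompact_of_isClosed_isBounded hclosed hbdd
  have hconv : Convex ℝ (clarkeDiff I) := (convex_convexHull ℝ _).closure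
  have hnorm : ∀ L ∈ clarkeDiff I, ‖L‖ ≤ (K₀ : ℝ) := by
    intro L hL
    have := hsub hL
    rwa [Metric.mem_closedBall, dist_zero_right] at this
  have hne : (clarkeDiff I).Nonempty := by
    obtain ⟨p, hp⟩ := (hLip.ae_differentiableAt (μ := volume)).exists
    exact ⟨_, ClarkeAux.fderiv_mem_clarkeDiff hp⟩
  refine ⟨hcomp, hconv, hnorm, fun u x => ?_⟩
  -- the inner sets
  have hSeq : ∀ v : G → ℝ, {s : ℝ | ∃ L ∈ clarkeDiff I, s = I v x + L (u - v) x}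
      = (fun L : (G → ℝ) →L[ℝ] (G → ℝ) => I v x + L (u - v) x) '' clarkeDiff I := by
    intro v
    ext s
    constructor
    · rintro ⟨L, hL, rfl⟩; exact ⟨L, hL, rfl⟩
    · rintro ⟨L, hL, rfl⟩; exact ⟨L, hL, rfl⟩
  have hFcont : ∀ v : G → ℝ,
      Continuous (fun L : (G → ℝ) →L[ℝ] (G → ℝ) => I v x + L (u - v) x) := by
    intro v
    have h1 : Continuous (fun L : (G → ℝ) →L[ℝ] (G → ℝ) => L (u - v)) :=
      (ContinuousLinearMap.apply ℝ (G → ℝ) (u - v)).continuous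
    exact continuous_const.add ((continuous_apply x).comp h1)
  have hScomp : ∀ v : G → ℝ,
      IsCompact {s : ℝ | ∃ L ∈ clarkeDiff I, s = I v x + L (u - v) x} := by
    intro v; rw [hSeq v]; exact hcomp.image (hFcont v)
  have hSne : ∀ v : G → ℝ,
      {s : ℝ | ∃ L ∈ clarkeDiff I, s = I v x + L (u - v) x}.Nonempty := by
    intro v; rw [hSeq v]; exact hne.image _
  have hmem : ∀ v : G → ℝ,
      sSup {s : ℝ | ∃ L ∈ clarkeDiff I, s = I v x + L (u - v) x}
        ∈ {s : ℝ | ∃ L ∈ clarkeDiff I, s = I v x + L (u - v) x} := fun v =>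
    (hScomp v).sSup_mem (hSne v)
  -- sup at v = u is I u x
  have hSu : {s : ℝ | ∃ L ∈ clarkeDiff I, s = I u x + L (u - u) x} = {I u x} := by
    ext s
    simp only [Set.mem_setOf_eq, Set.mem_singleton_iff, sub_self]
    constructor
    · rintro ⟨L, hL, rfl⟩; simp
    · rintro rfl
      obtain ⟨L, hL⟩ := hne
      exact ⟨L, hL, by simp⟩
  have hsupu : sSup {s : ℝ | ∃ L ∈ clarkeDiff I, s = I u x + L (u - u) x} = I u x := by
    rw [hSu, csSup_singleton]
  -- the lower bound for all v
  have hlb : ∀ v : G → ℝ,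
      I u x ≤ sSup {s : ℝ | ∃ L ∈ clarkeDiff I, s = I v x + L (u - v) x} := by
    intro v
    set S := {s : ℝ | ∃ L ∈ clarkeDiff I, s = I v x + L (u - v) x} with hS
    have hbddS : BddAbove S := (hScomp v).bddAbove
    have hc : ∀ p : G → ℝ, DifferentiableAt ℝ I p →
        (fderiv ℝ I p) (u - v) x ≤ sSup S - I v x := by
      intro p hp
      have hmemS : I v x + (fderiv ℝ I p) (u - v) x ∈ S :=
        ⟨fderiv ℝ I p, ClarkeAux.fderiv_mem_clarkeDiff hp, rfl⟩
      have := le_csSup hbddS hmemS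
      linarith
    have := ClarkeAux.key_ineq hLip u v x hc
    linarith
  refine ⟨hmem, ?_, hsupu⟩
  have hRmem : I u x ∈ {r : ℝ | ∃ v : G → ℝ,
      r = sSup {s : ℝ | ∃ L ∈ clarkeDiff I, s = I v x + L (u - v) x}} :=
    ⟨u, hsupu.symm⟩
  have hRlb : ∀ r ∈ {r : ℝ | ∃ v : G → ℝ,
      r = sSup {s : ℝ | ∃ L ∈ clarkeDiff I, s = I v x + L (u - v) x}}, I u x ≤ r := by
    rintro r ⟨v, rfl⟩
    exact hlb v
  exact le_antisymm (le_csInf ⟨_, hRmem⟩ hRlb) (csInf_le ⟨I u x, hRlb⟩ hRmem)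

end
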